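/- Let u be a nonnegative continuous function on [0,∞) and suppose there exist constants a, b ≥ 0 such that u(t) ≤ a + b ∫₀ᵗ u(s)/√(t−s) ds for every t ≥ 0. Then u(t) ≤ a(1 + 2b√t)·exp(π b² t) for all t ≥ 0. -/

import Mathlib

open Real MeasureTheory
open Set intervalIntegral
open scoped ENNReal


lemma one_div_sqrt_intble {c t : ℝ} (hct : c ≤ t) :
    IntervalIntegrable (fun s => 1 / Real.sqrt (t - s)) volume c t := by
  have h0 : IntervalIntegrable (fun x : ℝ => x ^ (-(1/2) : ℝ)) volume 0 (t - c) :=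
    intervalIntegral.intervalIntegrable_rpow' (by norm_num)
  have h1 : IntervalIntegrable (fun x : ℝ => 1 / Real.sqrt x) volume 0 (t - c) := by
    refine h0.mono_fun ?_ ?_
    · exact ((Real.continuous_sqrt.measurable).inv.const_mul 1).aestronglyMeasurable
      |>.congr (Filter.EventuallyEq.of_eq (by funext x; simp [one_div]))
    · filter_upwards [ae_restrict_mem measurableSet_uIoc] with x hx
      rw [Set.uIoc_of_le (by linarith)] at hx
      rw [Real.sqrt_eq_rpow, Real.rpow_neg hx.1.le, one_div]
  simpa using (h1.comp_sub_left t).symm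

lemma one_div_sqrt_integral {t : ℝ} (ht : 0 ≤ t) :
    ∫ s in (0:ℝ)..t, 1 / Real.sqrt (t - s) = 2 * Real.sqrt t := by
  rw [intervalIntegral.integral_comp_sub_left (fun x => 1 / Real.sqrt x) t, sub_self, sub_zero]
  have : ∀ x ∈ Set.uIcc (0:ℝ) t, 1 / Real.sqrt x = x ^ (-(1/2) : ℝ) := by
    intro x hx
    rw [Set.uIcc_of_le ht] at hx
    rcases eq_or_lt_of_le hx.1 with h | h
    · simp [← h, Real.zero_rpow (by norm_num : (-(1/2) : ℝ) ≠ 0)]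
    · rw [Real.sqrt_eq_rpow, Real.rpow_neg h.le, one_div]
  rw [intervalIntegral.integral_congr this, integral_rpow (Or.inl (by norm_num))]
  rw [Real.sqrt_eq_rpow]
  norm_num
  ring

lemma one_div_sqrt_intble' {d : ℝ} (hd : 0 ≤ d) :
    IntervalIntegrable (fun x : ℝ => 1 / Real.sqrt x) volume 0 d := by
  simpa using ((one_div_sqrt_intble (c := 0) (t := d) hd).comp_sub_left d).symm

lemma beta_meas : Measurable (fun x : ℝ => 1 / (Real.sqrt x * Real.sqrt (1 - x))) := by
  have : Measurable fun x : ℝ => Real.sqrt x * Real.sqrt (1 - x) :=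
    Real.continuous_sqrt.measurable.mul
      (Real.continuous_sqrt.comp (continuous_const.sub continuous_id)).measurable
  exact measurable_const.div this

lemma beta_intble :
    IntervalIntegrable (fun x : ℝ => 1 / (Real.sqrt x * Real.sqrt (1 - x))) volume 0 1 := by
  have key : ∀ x : ℝ, 0 < x → x < 1 → (Real.sqrt 2)⁻¹ ≤ Real.sqrt (1 - x) → (Real.sqrt 2)⁻¹ ≤ Real.sqrt x →
      True := fun _ _ _ _ _ => trivial
  have h1 : IntervalIntegrable (fun x : ℝ => 1 / (Real.sqrt x * Real.sqrt (1 - x)))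
      volume 0 (1/2) := by
    refine ((one_div_sqrt_intble' (by norm_num : (0:ℝ) ≤ 1/2)).const_mul (Real.sqrt 2)).mono_fun
      beta_meas.aestronglyMeasurable ?_
    filter_upwards [ae_restrict_mem measurableSet_uIoc] with x hx
    rw [Set.uIoc_of_le (by norm_num : (0:ℝ) ≤ 1/2)] at hx
    have hx0 : 0 < x := hx.1
    have hx1 : x ≤ 1/2 := hx.2
    have h1x : (Real.sqrt 2)⁻¹ ≤ Real.sqrt (1 - x) := by
      rw [← Real.sqrt_inv]; exact Real.sqrt_le_sqrt (by linarith)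
    have h1xpos : (0:ℝ) < (Real.sqrt 2)⁻¹ := by positivity
    rw [Real.norm_eq_abs, Real.norm_eq_abs, abs_of_nonneg (by positivity),
      abs_of_nonneg (by positivity)]
    have : 1 / (Real.sqrt x * Real.sqrt (1 - x)) ≤ 1 / (Real.sqrt x * (Real.sqrt 2)⁻¹) := by
      apply one_div_le_one_div_of_le (by positivity)
      exact mul_le_mul_of_nonneg_left h1x (Real.sqrt_nonneg x)
    refine this.trans (le_of_eq ?_)
    rw [one_div, mul_inv, inv_inv, mul_comm, one_div]
  have h2 : IntervalIntegrable (fun x : ℝ => 1 / (Real.sqrt x * Real.sqrt (1 - x)))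
      volume (1/2) 1 := by
    have hg : IntervalIntegrable (fun x : ℝ => Real.sqrt 2 * (1 / Real.sqrt (1 - x)))
        volume (1/2) 1 :=
      (one_div_sqrt_intble (c := 1/2) (t := 1) (by norm_num)).const_mul _
    refine hg.mono_fun beta_meas.aestronglyMeasurable ?_
    filter_upwards [ae_restrict_mem measurableSet_uIoc] with x hx
    rw [Set.uIoc_of_le (by norm_num : (1:ℝ)/2 ≤ 1)] at hx
    have hx0 : 1/2 < x := hx.1
    have hx1 : x ≤ 1 := hx.2
    have h1x : (Real.sqrt 2)⁻¹ ≤ Real.sqrt x := by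
      rw [← Real.sqrt_inv]; exact Real.sqrt_le_sqrt (by linarith)
    have h1xpos : (0:ℝ) < (Real.sqrt 2)⁻¹ := by positivity
    rw [Real.norm_eq_abs, Real.norm_eq_abs, abs_of_nonneg (by positivity),
      abs_of_nonneg (by positivity)]
    rcases eq_or_lt_of_le hx1 with hxx | hxx
    · rw [← hxx]
      simp
    · have hpos : (0:ℝ) < 1 - x := by linarith
      have : 1 / (Real.sqrt x * Real.sqrt (1 - x)) ≤ 1 / ((Real.sqrt 2)⁻¹ * Real.sqrt (1 - x)) := by
        apply one_div_le_one_div_of_le (by positivity)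
        exact mul_le_mul_of_nonneg_right h1x (Real.sqrt_nonneg _)
      refine this.trans (le_of_eq ?_)
      rw [one_div, mul_inv, inv_inv, one_div]
  exact h1.trans h2

lemma beta_val : ∫ x in (0:ℝ)..1, 1 / (Real.sqrt x * Real.sqrt (1 - x)) = π := by
  have hderiv : ∀ x ∈ Set.Ioo (0:ℝ) 1,
      HasDerivWithinAt (fun y => Real.arcsin (2*y - 1))
        (1 / (Real.sqrt x * Real.sqrt (1 - x))) (Set.Ioi x) x := by
    intro x hx
    have h1 : x ≠ 0 := ne_of_gt hx.1
    have h2 : (2*x - 1 : ℝ) ≠ -1 := by intro hc; apply h1; linarith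
    have h3 : (2*x - 1 : ℝ) ≠ 1 := by
      intro hc
      have hx2 := hx.2
      have : x = 1 := by linarith
      linarith
    have ha : HasDerivAt (fun y => Real.arcsin (2*y - 1))
        (1 / Real.sqrt (1 - (2*x-1)^2) * (2 * 1)) x :=
      by have hc := (Real.hasDerivAt_arcsin h2 h3).comp x
            (((hasDerivAt_id x).const_mul 2).sub_const 1)
         exact hc
    have heq : 1 / Real.sqrt (1 - (2*x-1)^2) * (2 * 1) = 1 / (Real.sqrt x * Real.sqrt (1 - x)) := by
      rw [mul_one]
      have : 1 - (2*x-1)^2 = 4 * (x * (1 - x)) := by ring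
      rw [this, Real.sqrt_mul (by norm_num : (0:ℝ) ≤ 4),
        Real.sqrt_mul hx.1.le, show Real.sqrt 4 = 2 by
          rw [show (4:ℝ) = 2^2 by norm_num, Real.sqrt_sq (by norm_num : (0:ℝ) ≤ 2)]]
      have hx' : Real.sqrt x > 0 := Real.sqrt_pos.mpr hx.1
      have h1x' : Real.sqrt (1 - x) > 0 := Real.sqrt_pos.mpr (by linarith [hx.2])
      field_simp
    rw [heq] at ha
    exact ha.hasDerivWithinAt
  have hcont : ContinuousOn (fun y => Real.arcsin (2*y - 1)) (Set.Icc 0 1) :=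
    (Real.continuous_arcsin.comp (by continuity)).continuousOn
  have := intervalIntegral.integral_eq_sub_of_hasDeriv_right_of_le (by norm_num : (0:ℝ) ≤ 1)
    hcont hderiv beta_intble
  rw [this]
  norm_num [Real.arcsin_one, Real.arcsin_neg_one]

lemma inner_meas {r t : ℝ} :
    Measurable (fun s : ℝ => 1 / (Real.sqrt (s - r) * Real.sqrt (t - s))) := by
  have : Measurable fun s : ℝ => Real.sqrt (s - r) * Real.sqrt (t - s) :=
    ((Real.continuous_sqrt.comp (continuous_id.sub continuous_const)).mul
      (Real.continuous_sqrt.comp (continuous_const.sub continuous_id))).measurable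
  exact measurable_const.div this

lemma inner_eq {r t : ℝ} (hrt : r < t) {s : ℝ} (hs : s ∈ Set.Ioc r t) :
    1 / (Real.sqrt (s - r) * Real.sqrt (t - s))
      = (t - r)⁻¹ * (1 / (Real.sqrt ((s - r) / (t - r)) * Real.sqrt (1 - (s - r) / (t - r)))) := by
  set c := t - r with hcdef
  have hc : 0 < c := by simp [hcdef]; linarith
  have h1 : 1 - (s - r) / c = (t - s) / c := by field_simp [hcdef]; linarith
  rw [h1, Real.sqrt_div (by linarith [hs.1] : (0:ℝ) ≤ s - r), Real.sqrt_div (by linarith [hs.2] : (0:ℝ) ≤ t - s)]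
  have h2 : Real.sqrt (s - r) / Real.sqrt c * (Real.sqrt (t - s) / Real.sqrt c)
      = Real.sqrt (s - r) * Real.sqrt (t - s) / c := by
    rw [div_mul_div_comm, Real.mul_self_sqrt hc.le]
  rw [h2, one_div, one_div, inv_div, div_eq_mul_inv, ← mul_assoc,
    inv_mul_cancel₀ hc.ne']
  rw [one_mul]

lemma inner_intble {r t : ℝ} (hrt : r < t) :
    IntervalIntegrable (fun s => 1 / (Real.sqrt (s - r) * Real.sqrt (t - s))) volume r t := by
  set c := t - r with hcdef
  have hc : 0 < c := by simp [hcdef]; linarith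
  have h0 : IntervalIntegrable
      (fun x : ℝ => c⁻¹ * (1 / (Real.sqrt x * Real.sqrt (1 - x)))) volume 0 1 :=
    beta_intble.const_mul _
  have h1 := h0.comp_mul_left (c := c⁻¹)
  rw [one_div, inv_inv] at h1
  have h2 := h1.comp_add_right (-r)
  rw [zero_div, zero_sub, neg_neg, sub_neg_eq_add] at h2
  have hct : c + r = t := by rw [hcdef]; ring
  rw [hct] at h2
  -- h2 : IntervalIntegrable (fun x => c⁻¹ * (1/(√(c⁻¹*(x + -r)) * √(1 - c⁻¹*(x + -r))))) volume r t
  refine h2.mono_fun inner_meas.aestronglyMeasurable ?_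
  filter_upwards [ae_restrict_mem measurableSet_uIoc] with s hs
  rw [Set.uIoc_of_le hrt.le] at hs
  have heq : 1 / (Real.sqrt (s - r) * Real.sqrt (t - s))
      = c⁻¹ * (1 / (Real.sqrt (c⁻¹ * (s + -r)) * Real.sqrt (1 - c⁻¹ * (s + -r)))) := by
    have := inner_eq hrt hs
    rw [this, div_eq_inv_mul, ← hcdef]
    ring_nf
  rw [heq]

lemma inner_val {r t : ℝ} (hrt : r < t) :
    ∫ s in r..t, 1 / (Real.sqrt (s - r) * Real.sqrt (t - s)) = π := by
  set c := t - r with hcdef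
  have hc : 0 < c := by simp [hcdef]; linarith
  have hsub := intervalIntegral.integral_comp_add_mul
    (a := 0) (b := 1) (fun s => 1 / (Real.sqrt (s - r) * Real.sqrt (t - s))) hc.ne' r
  rw [mul_zero, add_zero, mul_one] at hsub
  have hrc : r + c = t := by rw [hcdef]; ring
  rw [hrc] at hsub
  have hL : (∫ x in (0:ℝ)..1, (fun s => 1 / (Real.sqrt (s - r) * Real.sqrt (t - s))) (r + c * x))
      = c⁻¹ * π := by
    have : ∀ x ∈ Set.uIcc (0:ℝ) 1,
        (fun s => 1 / (Real.sqrt (s - r) * Real.sqrt (t - s))) (r + c * x)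
          = c⁻¹ * (1 / (Real.sqrt x * Real.sqrt (1 - x))) := by
      intro x hx
      simp only
      have e1 : r + c * x - r = c * x := by ring
      have e2 : t - (r + c * x) = c * (1 - x) := by rw [hcdef]; ring
      rw [e1, e2, Real.sqrt_mul hc.le, Real.sqrt_mul hc.le]
      have h2 : Real.sqrt c * Real.sqrt x * (Real.sqrt c * Real.sqrt (1 - x))
          = c * (Real.sqrt x * Real.sqrt (1 - x)) := by
        rw [show Real.sqrt c * Real.sqrt x * (Real.sqrt c * Real.sqrt (1 - x))
            = Real.sqrt c * Real.sqrt c * (Real.sqrt x * Real.sqrt (1 - x)) by ring,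
          Real.mul_self_sqrt hc.le]
      rw [h2, one_div, mul_inv, one_div, mul_comm]
    rw [intervalIntegral.integral_congr this, intervalIntegral.integral_const_mul, beta_val]
  rw [hL] at hsub
  have := hsub.symm
  rw [smul_eq_mul] at this
  -- this : c⁻¹ * ∫ = c⁻¹ * π
  exact mul_left_cancel₀ (inv_ne_zero hc.ne') this

variable {u : ℝ → ℝ}

lemma u_intble (hu_cont : ContinuousOn u (Set.Ici 0)) {t : ℝ} (ht : 0 ≤ t) :
    IntervalIntegrable (fun s => u s / Real.sqrt (t - s)) volume 0 t := by
  obtain ⟨M, hM⟩ := (isCompact_Icc (a := (0:ℝ)) (b := t)).exists_bound_of_continuousOn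
    (hu_cont.mono Set.Icc_subset_Ici_self)
  refine ((one_div_sqrt_intble ht).const_mul M).mono_fun ?_ ?_
  · rw [Set.uIoc_of_le ht]
    have hmeas : AEMeasurable u (volume.restrict (Set.Ioc 0 t)) :=
      (hu_cont.mono (Set.Ioc_subset_Icc_self.trans Set.Icc_subset_Ici_self)).aemeasurable
        measurableSet_Ioc
    exact (hmeas.div ((Real.continuous_sqrt.comp
      (continuous_const.sub continuous_id)).measurable.aemeasurable)).aestronglyMeasurable
  · filter_upwards [ae_restrict_mem measurableSet_uIoc] with s hs
    rw [Set.uIoc_of_le ht] at hs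
    have h1 : ‖u s‖ ≤ M := hM s (Set.Ioc_subset_Icc_self hs)
    have h2 : (0:ℝ) ≤ 1 / Real.sqrt (t - s) := by positivity
    calc ‖u s / Real.sqrt (t - s)‖ = ‖u s‖ * (1 / Real.sqrt (t - s)) := by
          rw [norm_div, Real.norm_eq_abs (Real.sqrt _), abs_of_nonneg (Real.sqrt_nonneg _),
            div_eq_mul_inv, one_div]
      _ ≤ M * (1 / Real.sqrt (t - s)) := by
          apply mul_le_mul_of_nonneg_right h1 h2
      _ ≤ ‖M * (1 / Real.sqrt (t - s))‖ := le_abs_self _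

lemma tonelli (hu_cont : ContinuousOn u (Set.Ici 0))
    (hu_nonneg : ∀ t, 0 ≤ t → 0 ≤ u t) {t : ℝ} (ht : 0 < t) :
    ∫⁻ s in Set.Ioc 0 t, (∫⁻ r in Set.Ioc 0 s, ENNReal.ofReal (u r / Real.sqrt (s - r))) *
        ENNReal.ofReal (1 / Real.sqrt (t - s))
      ≤ ENNReal.ofReal π * ∫⁻ r in Set.Ioc 0 t, ENNReal.ofReal (u r) := by
  set G : ℝ → ℝ → ℝ≥0∞ := fun s r =>
    ENNReal.ofReal (u r / Real.sqrt (s - r)) * ENNReal.ofReal (1 / Real.sqrt (t - s)) with hG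
  have step1 : ∫⁻ s in Set.Ioc 0 t,
      (∫⁻ r in Set.Ioc 0 s, ENNReal.ofReal (u r / Real.sqrt (s - r))) *
        ENNReal.ofReal (1 / Real.sqrt (t - s))
      = ∫⁻ s in Set.Ioc 0 t, ∫⁻ r in Set.Ioc 0 t, G s r := by
    refine setLIntegral_congr_fun measurableSet_Ioc ?_
    intro s hs
    dsimp only
    rw [← lintegral_mul_const' _ _ ENNReal.ofReal_ne_top]
    rw [← Set.Ioc_union_Ioc_eq_Ioc hs.1.le hs.2,
      lintegral_union measurableSet_Ioc (Set.Ioc_disjoint_Ioc_of_le le_rfl)]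
    have hzero : ∫⁻ r in Set.Ioc s t, G s r = 0 := by
      rw [show (0:ℝ≥0∞) = ∫⁻ _ in Set.Ioc s t, 0 by rw [lintegral_zero]]
      refine setLIntegral_congr_fun measurableSet_Ioc ?_
      intro r hr
      have : Real.sqrt (s - r) = 0 := Real.sqrt_eq_zero'.mpr (by linarith [hr.1])
      simp [hG, this]
    rw [hzero, add_zero]
  rw [step1]
  -- measurability for swap
  obtain ⟨v, hvmeas, hv⟩ := (hu_cont.mono
    (Set.Ioc_subset_Icc_self.trans Set.Icc_subset_Ici_self)).aemeasurable
      (measurableSet_Ioc : MeasurableSet (Set.Ioc (0:ℝ) t))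
  have hswap : AEMeasurable (Function.uncurry G)
      ((volume.restrict (Set.Ioc 0 t)).prod (volume.restrict (Set.Ioc 0 t))) := by
    refine ⟨fun p => ENNReal.ofReal (v p.2 / Real.sqrt (p.1 - p.2)) *
      ENNReal.ofReal (1 / Real.sqrt (t - p.1)), ?_, ?_⟩
    · have m1 : Measurable fun p : ℝ × ℝ => v p.2 / Real.sqrt (p.1 - p.2) :=
        (hvmeas.comp measurable_snd).div
          ((Real.continuous_sqrt.comp (continuous_fst.sub continuous_snd)).measurable)
      have m2 : Measurable fun p : ℝ × ℝ => 1 / Real.sqrt (t - p.1) :=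
        measurable_const.div
          ((Real.continuous_sqrt.comp (continuous_const.sub continuous_fst)).measurable)
      exact (ENNReal.measurable_ofReal.comp m1).mul (ENNReal.measurable_ofReal.comp m2)
    · have hsub : {p : ℝ × ℝ | ¬ Function.uncurry G p =
          ENNReal.ofReal (v p.2 / Real.sqrt (p.1 - p.2)) *
            ENNReal.ofReal (1 / Real.sqrt (t - p.1))}
          ⊆ Set.univ ×ˢ {r : ℝ | u r ≠ v r} := by
        intro p hp
        constructor
        · trivial
        · intro hc
          exact hp (by simp [Function.uncurry, hG, hc])
      refine measure_mono_null hsub ?_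
      rw [Measure.prod_prod]
      have : volume.restrict (Set.Ioc 0 t) {r : ℝ | u r ≠ v r} = 0 := hv
      rw [this, mul_zero]
  rw [lintegral_lintegral_swap hswap]
  have step3 : ∀ r ∈ Set.Ioc (0:ℝ) t,
      (∫⁻ s in Set.Ioc 0 t, G s r) ≤ ENNReal.ofReal (u r) * ENNReal.ofReal π := by
    intro r hr
    have hur : 0 ≤ u r := hu_nonneg r hr.1.le
    have hinner : ∀ s : ℝ, G s r = ENNReal.ofReal (u r) *
        ENNReal.ofReal (1 / (Real.sqrt (s - r) * Real.sqrt (t - s))) := by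
      intro s
      rw [hG]
      simp only
      rw [div_eq_mul_inv, ← one_div, ENNReal.ofReal_mul hur, mul_assoc,
        ← ENNReal.ofReal_mul (by positivity), one_div, one_div, ← mul_inv, one_div]
    calc ∫⁻ s in Set.Ioc 0 t, G s r
        = ENNReal.ofReal (u r) * ∫⁻ s in Set.Ioc 0 t,
            ENNReal.ofReal (1 / (Real.sqrt (s - r) * Real.sqrt (t - s))) := by
          simp_rw [hinner]
          exact lintegral_const_mul' _ _ ENNReal.ofReal_ne_top
      _ ≤ ENNReal.ofReal (u r) * ENNReal.ofReal π := by
          gcongr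
          rcases eq_or_lt_of_le hr.2 with hrt | hrt
          · have : ∀ s ∈ Set.Ioc (0:ℝ) t,
                ENNReal.ofReal (1 / (Real.sqrt (s - r) * Real.sqrt (t - s))) = 0 := by
              intro s hs
              have : Real.sqrt (s - r) = 0 := Real.sqrt_eq_zero'.mpr (by rw [hrt]; linarith [hs.2])
              simp [this]
            rw [setLIntegral_congr_fun measurableSet_Ioc this,
              lintegral_zero]
            exact zero_le
          · rw [← Set.Ioc_union_Ioc_eq_Ioc hr.1.le hr.2,
              lintegral_union measurableSet_Ioc (Set.Ioc_disjoint_Ioc_of_le le_rfl)]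
            have hzero : ∫⁻ s in Set.Ioc 0 r,
                ENNReal.ofReal (1 / (Real.sqrt (s - r) * Real.sqrt (t - s))) = 0 := by
              rw [show (0:ℝ≥0∞) = ∫⁻ _ in Set.Ioc (0:ℝ) r, 0 by rw [lintegral_zero]]
              refine setLIntegral_congr_fun measurableSet_Ioc ?_
              intro s hs
              have : Real.sqrt (s - r) = 0 := Real.sqrt_eq_zero'.mpr (by linarith [hs.2])
              simp [this]
            rw [hzero, zero_add]
            have heq : ∫⁻ s in Set.Ioc r t,
                ENNReal.ofReal (1 / (Real.sqrt (s - r) * Real.sqrt (t - s)))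
                = ENNReal.ofReal (∫ s in Set.Ioc r t,
                    1 / (Real.sqrt (s - r) * Real.sqrt (t - s))) := by
              rw [ofReal_integral_eq_lintegral_ofReal]
              · exact (intervalIntegrable_iff_integrableOn_Ioc_of_le hrt.le).mp
                  (inner_intble hrt)
              · exact Filter.Eventually.of_forall fun s => by positivity
            rw [heq, ← intervalIntegral.integral_of_le hrt.le, inner_val hrt]
  calc ∫⁻ r in Set.Ioc 0 t, ∫⁻ s in Set.Ioc 0 t, G s r
      ≤ ∫⁻ r in Set.Ioc 0 t, ENNReal.ofReal (u r) * ENNReal.ofReal π := by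
        refine lintegral_mono_ae ?_
        filter_upwards [ae_restrict_mem measurableSet_Ioc] with r hr
        exact step3 r hr
    _ = ENNReal.ofReal π * ∫⁻ r in Set.Ioc 0 t, ENNReal.ofReal (u r) := by
        simp_rw [mul_comm (ENNReal.ofReal (u _)) (ENNReal.ofReal π)]
        exact lintegral_const_mul' _ _ ENNReal.ofReal_ne_top

lemma key {u : ℝ → ℝ} {a b : ℝ} (ha : 0 ≤ a) (hb : 0 ≤ b)
    (hu_cont : ContinuousOn u (Set.Ici 0))
    (hu_nonneg : ∀ t, 0 ≤ t → 0 ≤ u t)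
    (h : ∀ t, 0 ≤ t → u t ≤ a + b * ∫ s in (0:ℝ)..t, u s / Real.sqrt (t - s))
    {t : ℝ} (ht : 0 < t) :
    u t ≤ a + 2*a*b*Real.sqrt t + π * b^2 * ∫ s in (0:ℝ)..t, u s := by
  set J : ℝ → ℝ := fun s => ∫ r in (0:ℝ)..s, u r / Real.sqrt (s - r) with hJdef
  have hkermeas : ∀ c : ℝ, Measurable fun s : ℝ => 1 / Real.sqrt (c - s) := fun c =>
    measurable_const.div ((Real.continuous_sqrt.comp (continuous_const.sub continuous_id)).measurable)
  have hJnn : ∀ s : ℝ, 0 ≤ s → 0 ≤ J s := fun s hs =>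
    intervalIntegral.integral_nonneg hs fun r hr =>
      div_nonneg (hu_nonneg r hr.1) (Real.sqrt_nonneg _)
  have hJL : ∀ s : ℝ, 0 ≤ s →
      ENNReal.ofReal (J s) = ∫⁻ r in Set.Ioc 0 s, ENNReal.ofReal (u r / Real.sqrt (s - r)) := by
    intro s hs
    rw [hJdef]
    simp only
    rw [intervalIntegral.integral_of_le hs, ofReal_integral_eq_lintegral_ofReal
      ((intervalIntegrable_iff_integrableOn_Ioc_of_le hs).mp (u_intble hu_cont hs)) ?_]
    filter_upwards [ae_restrict_mem measurableSet_Ioc] with r hr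
    exact div_nonneg (hu_nonneg r hr.1.le) (Real.sqrt_nonneg _)
  have hIu : 0 ≤ ∫ s in (0:ℝ)..t, u s :=
    intervalIntegral.integral_nonneg ht.le fun r hr => hu_nonneg r hr.1
  have hu_int : IntervalIntegrable u volume 0 t :=
    (hu_cont.mono (by rw [Set.uIcc_of_le ht.le]; exact Set.Icc_subset_Ici_self)).intervalIntegrable
  have huL : ENNReal.ofReal (∫ s in (0:ℝ)..t, u s)
      = ∫⁻ r in Set.Ioc 0 t, ENNReal.ofReal (u r) := by
    rw [intervalIntegral.integral_of_le ht.le, ofReal_integral_eq_lintegral_ofReal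
      ((intervalIntegrable_iff_integrableOn_Ioc_of_le ht.le).mp hu_int) ?_]
    filter_upwards [ae_restrict_mem measurableSet_Ioc] with r hr
    exact hu_nonneg r hr.1.le
  have chain : ENNReal.ofReal (J t)
      ≤ ENNReal.ofReal (a * (2*Real.sqrt t) + b * (π * ∫ s in (0:ℝ)..t, u s)) := by
    calc ENNReal.ofReal (J t)
        = ∫⁻ s in Set.Ioc 0 t, ENNReal.ofReal (u s / Real.sqrt (t - s)) := hJL t ht.le
      _ ≤ ∫⁻ s in Set.Ioc 0 t, (ENNReal.ofReal a * ENNReal.ofReal (1 / Real.sqrt (t - s))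
            + ENNReal.ofReal b * (ENNReal.ofReal (J s) * ENNReal.ofReal (1 / Real.sqrt (t - s)))) := by
          refine lintegral_mono_ae ?_
          filter_upwards [ae_restrict_mem measurableSet_Ioc] with s hs
          have h2 : u s ≤ a + b * J s := h s hs.1.le
          calc ENNReal.ofReal (u s / Real.sqrt (t - s))
              ≤ ENNReal.ofReal ((a + b * J s) * (1 / Real.sqrt (t - s))) := by
                rw [div_eq_mul_inv, ← one_div]
                exact ENNReal.ofReal_le_ofReal
                  (mul_le_mul_of_nonneg_right h2 (by positivity))
            _ = ENNReal.ofReal a * ENNReal.ofReal (1 / Real.sqrt (t - s))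
                + ENNReal.ofReal b * (ENNReal.ofReal (J s) * ENNReal.ofReal (1 / Real.sqrt (t - s))) := by
                rw [add_mul, ENNReal.ofReal_add (by positivity)
                  (mul_nonneg (mul_nonneg hb (hJnn s hs.1.le)) (by positivity)),
                  ENNReal.ofReal_mul ha, mul_assoc, ENNReal.ofReal_mul hb,
                  ENNReal.ofReal_mul (hJnn s hs.1.le)]
      _ = ENNReal.ofReal a * (∫⁻ s in Set.Ioc 0 t, ENNReal.ofReal (1 / Real.sqrt (t - s)))
            + ENNReal.ofReal b * ∫⁻ s in Set.Ioc 0 t,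
                ENNReal.ofReal (J s) * ENNReal.ofReal (1 / Real.sqrt (t - s)) := by
          have hm : Measurable fun s : ℝ =>
              ENNReal.ofReal a * ENNReal.ofReal (1 / Real.sqrt (t - s)) :=
            ((hkermeas t).ennreal_ofReal.const_mul _)
          rw [lintegral_add_left hm,
            lintegral_const_mul' _ _ ENNReal.ofReal_ne_top,
            lintegral_const_mul' _ _ ENNReal.ofReal_ne_top]
      _ ≤ ENNReal.ofReal a * ENNReal.ofReal (2*Real.sqrt t)
            + ENNReal.ofReal b * (ENNReal.ofReal π * ∫⁻ r in Set.Ioc 0 t, ENNReal.ofReal (u r)) := by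
          gcongr
          · apply le_of_eq
            rw [← one_div_sqrt_integral ht.le, intervalIntegral.integral_of_le ht.le,
              ofReal_integral_eq_lintegral_ofReal
                ((intervalIntegrable_iff_integrableOn_Ioc_of_le ht.le).mp (one_div_sqrt_intble ht.le))
                (Filter.Eventually.of_forall fun s => by positivity)]
          · calc ∫⁻ s in Set.Ioc 0 t, ENNReal.ofReal (J s) * ENNReal.ofReal (1 / Real.sqrt (t - s))
                = ∫⁻ s in Set.Ioc 0 t, (∫⁻ r in Set.Ioc 0 s,
                    ENNReal.ofReal (u r / Real.sqrt (s - r))) * ENNReal.ofReal (1 / Real.sqrt (t - s)) := by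
                  refine setLIntegral_congr_fun measurableSet_Ioc ?_
                  intro s hs
                  dsimp only
                  rw [hJL s hs.1.le]
              _ ≤ ENNReal.ofReal π * ∫⁻ r in Set.Ioc 0 t, ENNReal.ofReal (u r) :=
                  tonelli hu_cont hu_nonneg ht
      _ = ENNReal.ofReal (a * (2*Real.sqrt t) + b * (π * ∫ s in (0:ℝ)..t, u s)) := by
          rw [ENNReal.ofReal_add (by positivity) (mul_nonneg hb (mul_nonneg Real.pi_pos.le hIu)),
            ENNReal.ofReal_mul ha, ENNReal.ofReal_mul hb, ENNReal.ofReal_mul Real.pi_pos.le, huL]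
  have hJt : J t ≤ a * (2*Real.sqrt t) + b * (π * ∫ s in (0:ℝ)..t, u s) := by
    refine (ENNReal.ofReal_le_ofReal_iff ?_).mp chain
    positivity
  calc u t ≤ a + b * J t := h t ht.le
    _ ≤ a + b * (a * (2*Real.sqrt t) + b * (π * ∫ s in (0:ℝ)..t, u s)) := by
        exact add_le_add_right (mul_le_mul_of_nonneg_left hJt hb) a
    _ = a + 2*a*b*Real.sqrt t + π * b^2 * ∫ s in (0:ℝ)..t, u s := by ring

/-- Singular-kernel Gronwall inequality: if a nonnegative continuous `u` on `[0,∞)`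
satisfies `u t ≤ a + b ∫₀ᵗ u s / √(t-s) ds`, then
`u t ≤ a (1 + 2 b √t) exp (π b² t)`. -/
theorem singular_gronwall (u : ℝ → ℝ) (a b : ℝ) (ha : 0 ≤ a) (hb : 0 ≤ b)
    (hu_cont : ContinuousOn u (Set.Ici 0))
    (hu_nonneg : ∀ t, 0 ≤ t → 0 ≤ u t)
    (h : ∀ t, 0 ≤ t → u t ≤ a + b * ∫ s in (0:ℝ)..t, u s / Real.sqrt (t - s)) :
    ∀ t, 0 ≤ t → u t ≤ a * (1 + 2 * b * Real.sqrt t) * Real.exp (π * b ^ 2 * t) := by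
  intro T hT
  set K : ℝ := π * b ^ 2 with hKdef
  set ε : ℝ := a * (1 + 2 * b * Real.sqrt T) with hεdef
  have hK : 0 ≤ K := by positivity
  have hε : 0 ≤ ε := by positivity
  set v : ℝ → ℝ := fun x => ∫ s in (0:ℝ)..x, u s with hvdef
  have hv_cont : ContinuousOn v (Set.Icc 0 T) := by
    have hint : IntegrableOn u (Set.uIcc 0 T) volume := by
      rw [Set.uIcc_of_le hT]
      exact (hu_cont.mono Set.Icc_subset_Ici_self).integrableOn_compact isCompact_Icc
    have := intervalIntegral.continuousOn_primitive_interval (a := (0:ℝ)) (b := T) hint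
    rwa [Set.uIcc_of_le hT] at this
  have hv_deriv : ∀ x ∈ Set.Ico 0 T, HasDerivWithinAt v (u x) (Set.Ici x) x := by
    intro x hx
    have hxi : IntervalIntegrable u volume 0 x :=
      (hu_cont.mono (by rw [Set.uIcc_of_le hx.1]; exact Set.Icc_subset_Ici_self)).intervalIntegrable
    have hsub : Set.Ioi x ⊆ Set.Ici (0:ℝ) := fun y hy => le_trans hx.1 (le_of_lt hy)
    have hmeas : StronglyMeasurableAtFilter u (nhdsWithin x (Set.Ioi x)) volume :=
      ⟨Set.Ioi x, self_mem_nhdsWithin,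
        ((hu_cont.mono hsub).aemeasurable measurableSet_Ioi).aestronglyMeasurable⟩
    have hcw : ContinuousWithinAt u (Set.Ioi x) x :=
      (hu_cont x hx.1).mono hsub
    exact intervalIntegral.integral_hasDerivWithinAt_right hxi hmeas hcw
  have hv0 : v 0 = 0 := intervalIntegral.integral_same
  have hvnn : ∀ x, 0 ≤ x → 0 ≤ v x := fun x hx =>
    intervalIntegral.integral_nonneg hx fun r hr => hu_nonneg r hr.1
  have hεa : a ≤ ε := by
    rw [hεdef]
    nlinarith [mul_nonneg (mul_nonneg ha hb) (Real.sqrt_nonneg T)]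
  have bound : ∀ x ∈ Set.Ico 0 T, ‖u x‖ ≤ K * ‖v x‖ + ε := by
    intro x hx
    rw [Real.norm_eq_abs, abs_of_nonneg (hu_nonneg x hx.1), Real.norm_eq_abs,
      abs_of_nonneg (hvnn x hx.1)]
    rcases eq_or_lt_of_le hx.1 with hx0 | hx0
    · have hu0 : u x ≤ a := by
        have := h x hx.1
        rw [← hx0] at this ⊢
        simpa using this
      have : 0 ≤ K * v x := mul_nonneg hK (hvnn x hx.1)
      linarith
    · have hk := key ha hb hu_cont hu_nonneg h hx0
      have h2 : 2*a*b*Real.sqrt x ≤ 2*a*b*Real.sqrt T :=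
        mul_le_mul_of_nonneg_left (Real.sqrt_le_sqrt hx.2.le) (by positivity)
      have hε2 : ε = a + 2*a*b*Real.sqrt T := by rw [hεdef]; ring
      rw [hKdef]
      rw [hεdef] at hε2 ⊢
      nlinarith [hk, h2]
  have hgron := norm_le_gronwallBound_of_norm_deriv_right_le hv_cont hv_deriv
    (by rw [hv0, norm_zero] : ‖v 0‖ ≤ 0) bound T ⟨hT, le_rfl⟩
  rw [sub_zero, Real.norm_eq_abs, abs_of_nonneg (hvnn T hT)] at hgron
  have hfin : u T ≤ ε + K * v T := by
    rcases eq_or_lt_of_le hT with hT0 | hT0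
    · have hu0 : u T ≤ a := by
        have := h T hT
        rw [← hT0] at this ⊢
        simpa using this
      have : 0 ≤ K * v T := mul_nonneg hK (hvnn T hT)
      linarith
    · have hk := key ha hb hu_cont hu_nonneg h hT0
      have hε2 : ε = a + 2*a*b*Real.sqrt T := by rw [hεdef]; ring
      rw [hε2]
      rw [hKdef]
      linarith [hk]
  have final : u T ≤ ε * Real.exp (K * T) := by
    have step : u T ≤ ε + K * gronwallBound 0 K ε T :=
      le_trans hfin (by linarith [mul_le_mul_of_nonneg_left hgron hK])
    refine le_trans step ?_
    by_cases hKz : K = 0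
    · rw [hKz]
      simp
    · rw [gronwallBound_of_K_ne_0 hKz]
      have hKmul : K * (0 * Real.exp (K * T) + ε / K * (Real.exp (K * T) - 1))
          = ε * (Real.exp (K * T) - 1) := by
        field_simp
        ring
      rw [hKmul]
      have : ε + ε * (Real.exp (K * T) - 1) = ε * Real.exp (K * T) := by ring
      linarith
  calc u T ≤ ε * Real.exp (K * T) := final
    _ = a * (1 + 2 * b * Real.sqrt T) * Real.exp (π * b ^ 2 * T) := by rw [hεdef, hKdef]
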